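/- arXiv:1010.4819 — 2 statements merged into one kernel-verified Lean document; each statement's English description precedes it below -/
import Mathlib

section
/- If C is a small category in which the only endomorphisms are identities and Hom(i,j) ≠ ∅ implies Hom(j,i) = ∅ for i ≠ j (i.e., C is a 'delta'), then the barycentric subdivision C' of C is a poset, i.e., between any two objects of C' there is at most one morphism, and the resulting relation is a partial order. -/
open CategoryTheory

universe v u

/-- A `p`-simplex in a category `C`: a functor `[p] → C` where `[p] = {0 < ... < p}`
is realized as `Fin (p+1)` with its order category structure. -/
structure CatSimplex (C : Type u) [Category.{v} C] where
  dim : ℕ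
  F : Fin (dim + 1) ⥤ C

variable {C : Type u} [Category.{v} C]

/-- A morphism `τ → σ` in the subdivision `C'` of `C`: a triple `[τ, σ, v]` where
`v = τ(0 → f 0)` for some monotone (strictly order-preserving) functor
`f : [dim σ] → [dim τ]` with `τ ∘ f = σ`.  (The triple is determined by `v`,
together with its domain and codomain.) -/
def SubdivHom (τ σ : CatSimplex C) : Type v :=
  { v : τ.F.obj 0 ⟶ σ.F.obj 0 //
    ∃ (f : Fin (σ.dim + 1) →o Fin (τ.dim + 1)) (_ : StrictMono f)
      (hc : f.monotone.functor ⋙ τ.F = σ.F),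
      v = τ.F.map (homOfLE (Fin.zero_le (f 0))) ≫
        eqToHom (congrArg (fun G : Fin (σ.dim + 1) ⥤ C => G.obj 0) hc) }

/-- endomorphism-free: any map with equal endpoints is an eqToHom. -/
lemma map_eq_eqToHom {n : ℕ} (hend : ∀ (i : C) (e : i ⟶ i), e = 𝟙 i)
    (F : Fin (n + 1) ⥤ C) {i j : Fin (n + 1)} (h : i ≤ j)
    (e : F.obj i = F.obj j) : F.map (homOfLE h) = eqToHom e := by
  have := hend (F.obj i) (F.map (homOfLE h) ≫ eqToHom e.symm)
  rw [CategoryTheory.comp_eqToHom_iff] at this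
  simpa using this

lemma strictMono_fin_self {n : ℕ} {f : Fin n → Fin n} (hf : StrictMono f) :
    f = id := by
  haveI : WellFoundedLT (Fin n) := Finite.to_wellFoundedLT
  haveI : WellFoundedGT (Fin n) := Finite.to_wellFoundedGT
  funext x
  exact le_antisymm hf.apply_le hf.le_apply

/-- If `C` is a delta (the only endomorphisms are identities and
`Hom(i,j) ≠ ∅ → Hom(j,i) = ∅` for `i ≠ j`), then the subdivision `C'` is a poset:
there is at most one morphism between any two simplices, and the relation
"there exists a morphism" is reflexive, transitive and antisymmetric. -/
theorem subdivision_of_delta_isPoset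
    (hend : ∀ (i : C) (e : i ⟶ i), e = 𝟙 i)
    (hasym : ∀ i j : C, i ≠ j → Nonempty (i ⟶ j) → IsEmpty (j ⟶ i)) :
    (∀ τ σ : CatSimplex C, Subsingleton (SubdivHom τ σ)) ∧
    (∀ τ : CatSimplex C, Nonempty (SubdivHom τ τ)) ∧
    (∀ τ σ ω : CatSimplex C,
      Nonempty (SubdivHom τ σ) → Nonempty (SubdivHom σ ω) → Nonempty (SubdivHom τ ω)) ∧
    (∀ τ σ : CatSimplex C,
      Nonempty (SubdivHom τ σ) → Nonempty (SubdivHom σ τ) → τ = σ) := by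
  refine ⟨?_, ?_, ?_, ?_⟩
  · -- subsingleton
    rintro τ σ
    constructor
    rintro ⟨v₁, f, hf, hcf, hv₁⟩ ⟨v₂, g, hg, hcg, hv₂⟩
    have key : ∀ (f g : Fin (σ.dim + 1) →o Fin (τ.dim + 1))
        (hcf : f.monotone.functor ⋙ τ.F = σ.F)
        (hcg : g.monotone.functor ⋙ τ.F = σ.F), f 0 ≤ g 0 →
        τ.F.map (homOfLE (Fin.zero_le (f 0))) ≫
          eqToHom (congrArg (fun G : Fin (σ.dim + 1) ⥤ C => G.obj 0) hcf) =
        τ.F.map (homOfLE (Fin.zero_le (g 0))) ≫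
          eqToHom (congrArg (fun G : Fin (σ.dim + 1) ⥤ C => G.obj 0) hcg) := by
      intro f g hcf hcg hle
      have e : τ.F.obj (f 0) = τ.F.obj (g 0) :=
        (congrArg (fun G : Fin (σ.dim + 1) ⥤ C => G.obj 0) hcf).trans
          (congrArg (fun G : Fin (σ.dim + 1) ⥤ C => G.obj 0) hcg).symm
      have h1 : τ.F.map (homOfLE hle) = eqToHom e := map_eq_eqToHom hend τ.F hle e
      have h2 : homOfLE (Fin.zero_le (g 0)) =
          homOfLE (Fin.zero_le (f 0)) ≫ homOfLE hle := rfl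
      rw [h2, Functor.map_comp, h1, Category.assoc]
      congr 1
      exact (eqToHom_trans _ _).symm
    subst hv₁ hv₂
    apply Subtype.ext
    rcases le_total (f 0) (g 0) with h | h
    · exact key f g hcf hcg h
    · exact (key g f hcg hcf h).symm
  · -- refl
    intro τ
    refine ⟨⟨τ.F.map (homOfLE (Fin.zero_le _)) ≫ eqToHom _, OrderHom.id, strictMono_id, ?_, rfl⟩⟩
    apply CategoryTheory.Functor.ext
    · intro X Y g
      have : homOfLE (OrderHom.id.monotone (leOfHom g)) = g := rfl
      simp [Monotone.functor, this]
      change τ.F.map g = 𝟙 _ ≫ τ.F.map g ≫ 𝟙 _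
      simp
    · intro X; rfl
  · -- trans
    rintro τ σ ω ⟨⟨v, f, hf, hcf, -⟩⟩ ⟨⟨w, g, hg, hcg, -⟩⟩
    have hcomp : (f.comp g).monotone.functor ⋙ τ.F = ω.F := by
      have h1 : (f.comp g).monotone.functor = g.monotone.functor ⋙ f.monotone.functor := by
        apply CategoryTheory.Functor.ext
        · intro X Y k; rfl
        · intro X; rfl
      rw [h1, Functor.assoc, hcf, hcg]
    exact ⟨⟨_, f.comp g, hf.comp hg, hcomp, rfl⟩⟩
  · -- antisymm
    rintro ⟨p, τF⟩ ⟨q, σF⟩ ⟨⟨v, f, hf, hcf, -⟩⟩ ⟨⟨w, g, hg, hcg, -⟩⟩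
    dsimp only at f g hcf hcg
    have hpq : p = q := by
      have h1 : q + 1 ≤ p + 1 := Fintype.card_fin (q+1) ▸ Fintype.card_fin (p+1) ▸
        Fintype.card_le_of_injective f hf.injective
      have h2 : p + 1 ≤ q + 1 := Fintype.card_fin (p+1) ▸ Fintype.card_fin (q+1) ▸
        Fintype.card_le_of_injective g hg.injective
      omega
    subst hpq
    have hfid : (f : Fin (p + 1) → Fin (p + 1)) = id := strictMono_fin_self hf
    have : f.monotone.functor = 𝟭 (Fin (p + 1)) := by
      apply CategoryTheory.Functor.ext
      · intro X Y k
        apply Subsingleton.elim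
      · intro X; exact congrFun hfid X
    rw [this, Functor.id_comp] at hcf
    exact congrArg (CatSimplex.mk p) hcf
end

section
/- For any right-bounded complex P• of relative projective A-modules and any right-bounded complex Q• of A-modules, the canonical map Mor_{K^-(A-mod)}(P•, Q•) → Mor_{D^-_k(A-mod)}(P•, Q•) from homotopy classes of chain maps to morphisms in the relative derived category is an isomorphism. -/
open CategoryTheory

universe w v u w2 v2

/-- A diagram of `k`-algebras over a small category `C`: a presheaf of unital
associative `k`-algebras, with `φ v : A^{cv} → A^{dv}` for each morphism `v`. -/
structure Diagram (k : Type u) [CommRing k] (C : Type v) [Category.{w} C] where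
  A : C → Type u
  [ringA : ∀ i, Ring (A i)]
  [algA : ∀ i, Algebra k (A i)]
  φ : ∀ {h i : C}, (h ⟶ i) → (A i →ₐ[k] A h)
  φ_id : ∀ i : C, φ (𝟙 i) = AlgHom.id k (A i)
  φ_comp : ∀ {h i j : C} (u : h ⟶ i) (v : i ⟶ j), φ (u ≫ v) = (φ u).comp (φ v)

attribute [instance] Diagram.ringA Diagram.algA

variable {k : Type u} [CommRing k] {C : Type v} [Category.{w} C]

/-- A left module over a diagram `𝔸`: a presheaf of abelian groups `M` with
`M^i` an `𝔸^i`-module and `T^v : M^{cv} → M^{dv}` additive and `φ^v`-semilinear. -/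
structure DMod (𝔸 : Diagram k C) where
  M : C → Type u
  [acg : ∀ i, AddCommGroup (M i)]
  [mod : ∀ i, Module (𝔸.A i) (M i)]
  T : ∀ {h i : C}, (h ⟶ i) → (M i →+ M h)
  T_smul : ∀ {h i : C} (v : h ⟶ i) (a : 𝔸.A i) (m : M i),
    T v (a • m) = 𝔸.φ v a • T v m
  T_id : ∀ i : C, T (𝟙 i) = AddMonoidHom.id (M i)
  T_comp : ∀ {h i j : C} (u : h ⟶ i) (v : i ⟶ j), T (u ≫ v) = (T u).comp (T v)

attribute [instance] DMod.acg DMod.mod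

variable {𝔸 : Diagram k C}

/-- A morphism of `𝔸`-modules: a natural transformation which is objectwise
`𝔸^i`-linear. -/
@[ext]
structure DModHom (M N : DMod 𝔸) where
  app : ∀ i : C, M.M i →+ N.M i
  app_smul : ∀ (i : C) (a : 𝔸.A i) (m : M.M i), app i (a • m) = a • app i m
  naturality : ∀ {h i : C} (v : h ⟶ i) (m : M.M i), app h (M.T v m) = N.T v (app i m)

instance : Category (DMod 𝔸) where
  Hom := DModHom
  id M := ⟨fun i => AddMonoidHom.id _, fun _ _ _ => rfl, fun _ _ => rfl⟩
  comp f g := ⟨fun i => (g.app i).comp (f.app i),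
    fun i a m => by simp [f.app_smul, g.app_smul],
    fun v m => by simp [f.naturality, g.naturality]⟩

@[ext]
lemma DModHom.hext {M N : DMod 𝔸} {f g : M ⟶ N}
    (h : ∀ (i : C) (m : M.M i), f.app i m = g.app i m) : f = g := by
  have happ : f.app = g.app := by
    funext i; ext m; exact h i m
  exact DModHom.ext happ

instance {M N : DMod 𝔸} : Zero (M ⟶ N) :=
  ⟨⟨fun _ => 0, fun i a m => by simp, fun v m => by simp⟩⟩

instance {M N : DMod 𝔸} : Add (M ⟶ N) :=
  ⟨fun f g => ⟨fun i => f.app i + g.app i,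
    fun i a m => by simp [f.app_smul, g.app_smul, smul_add],
    fun v m => by simp [f.naturality, g.naturality]⟩⟩

instance {M N : DMod 𝔸} : Neg (M ⟶ N) :=
  ⟨fun f => ⟨fun i => -(f.app i),
    fun i a m => by simp [f.app_smul],
    fun v m => by simp [f.naturality]⟩⟩

instance {M N : DMod 𝔸} : AddCommGroup (M ⟶ N) where
  add_assoc f g h := by ext i m; exact add_assoc _ _ _
  zero_add f := by ext i m; exact zero_add _
  add_zero f := by ext i m; exact add_zero _
  add_comm f g := by ext i m; exact add_comm _ _
  neg_add_cancel f := by ext i m; exact neg_add_cancel _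
  nsmul := nsmulRec
  zsmul := zsmulRec

instance : Preadditive (DMod 𝔸) where
  add_comp := by intros; apply DModHom.hext; intro i m; exact map_add (_ : _ →+ _) _ _
  comp_add := by intros; apply DModHom.hext; intros; rfl

/-- The `k`-module structure on each `M^i`, via the algebra map `k → 𝔸^i`. -/
instance kMod (M : DMod 𝔸) (i : C) : Module k (M.M i) :=
  Module.compHom (M.M i) (algebraMap k (𝔸.A i))

/-- A morphism of `𝔸`-modules is allowable if each `η^i` admits a `k`-linear map
`s^i` with `η^i ∘ s^i ∘ η^i = η^i`. -/
def Allowable {M N : DMod 𝔸} (f : M ⟶ N) : Prop :=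
  ∀ i : C, ∃ s : N.M i →ₗ[k] M.M i, ∀ m : M.M i, f.app i (s (f.app i m)) = f.app i m

/-- An `𝔸`-module `P` is relative projective if every allowable epimorphism lifts
maps from `P`. -/
def RelProjective (P : DMod 𝔸) : Prop :=
  ∀ (M N : DMod 𝔸) (e : M ⟶ N), Allowable e → (∀ i, Function.Surjective (e.app i)) →
    ∀ g : P ⟶ N, ∃ h : P ⟶ M, h ≫ e = g

/-- The underlying `k`-linear map of `f^i`. -/
def DModHom.kLinear {M N : DMod 𝔸} (f : M ⟶ N) (i : C) : M.M i →ₗ[k] N.M i where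
  toFun := f.app i
  map_add' := map_add _
  map_smul' := fun a m => f.app_smul i (algebraMap k (𝔸.A i) a) m

/-- The complex of `k`-modules obtained from a complex of `𝔸`-modules by
evaluating at an object `i` of `C` (and restricting scalars to `k`). -/
noncomputable def evalCx (X : ChainComplex (DMod 𝔸) ℕ) (i : C) :
    ChainComplex (ModuleCat.{u} k) ℕ where
  X n := ModuleCat.of k ((X.X n).M i)
  d n m := ModuleCat.ofHom (DModHom.kLinear (X.d n m) i)
  shape n m h := by
    ext x
    exact congrArg (fun g : DModHom _ _ => g.app i x) (X.shape n m h)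
  d_comp_d' n m l _ _ := by
    ext x
    exact congrArg (fun g : DModHom _ _ => g.app i x) (X.d_comp_d n m l)

/-- Evaluation of a chain map at an object `i` of `C`. -/
noncomputable def evalMap {X Y : ChainComplex (DMod 𝔸) ℕ} (f : X ⟶ Y) (i : C) :
    evalCx X i ⟶ evalCx Y i where
  f n := ModuleCat.ofHom (DModHom.kLinear (f.f n) i)
  comm' n m _ := by
    ext x
    exact congrArg (fun g : DModHom _ _ => g.app i x) (f.comm n m)

/-- A map of complexes of `𝔸`-modules is a relative quasi-isomorphism if, for every
object `i` of `C`, its cone, regarded as a complex of `k`-modules, is contractible. -/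
noncomputable def RelQIsoCx {X Y : ChainComplex (DMod 𝔸) ℕ} (f : X ⟶ Y) : Prop :=
  ∀ i : C, Nonempty (Homotopy (𝟙 (HomologicalComplex.homotopyCofiber (evalMap f i))) 0)

/-- The class `Σ` of relative quasi-isomorphisms, as a class of morphisms of the
homotopy category `K^-(𝔸-mod)`. -/
noncomputable def RelQIsoW (𝔸 : Diagram k C) :
    MorphismProperty (HomotopyCategory (DMod 𝔸) (ComplexShape.down ℕ)) :=
  fun X Y g => ∃ g₀ : X.as ⟶ Y.as,
    (HomotopyCategory.quotient _ _).map g₀ = g ∧ RelQIsoCx g₀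

/-- The relative derived category `D^-_k(𝔸-mod)`: the localization of the homotopy
category `K^-(𝔸-mod)` at the class of relative quasi-isomorphisms. -/
noncomputable abbrev DerivedDMod (𝔸 : Diagram k C) := (RelQIsoW 𝔸).Localization

section Infrastructure

variable {𝔸 : Diagram k C}

@[simp] lemma DModHom_comp_app {M N L : DMod 𝔸} (f : M ⟶ N) (g : N ⟶ L) (i : C) (m : M.M i) :
    (f ≫ g).app i m = g.app i (f.app i m) := rfl

@[simp] lemma DModHom_id_app {M : DMod 𝔸} (i : C) (m : M.M i) :
    (𝟙 M : M ⟶ M).app i m = m := rfl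

@[simp] lemma DModHom_zero_app {M N : DMod 𝔸} (i : C) (m : M.M i) :
    (0 : M ⟶ N).app i m = 0 := rfl

@[simp] lemma DModHom_add_app {M N : DMod 𝔸} (f g : M ⟶ N) (i : C) (m : M.M i) :
    (f + g).app i m = f.app i m + g.app i m := rfl

@[simp] lemma DModHom_neg_app {M N : DMod 𝔸} (f : M ⟶ N) (i : C) (m : M.M i) :
    (-f).app i m = -(f.app i m) := rfl

@[simp] lemma DModHom_sub_app {M N : DMod 𝔸} (f g : M ⟶ N) (i : C) (m : M.M i) :
    (f - g).app i m = f.app i m - g.app i m := by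
  rw [sub_eq_add_neg, sub_eq_add_neg]; rfl

/-- Binary product of `𝔸`-modules. -/
def prodDMod (M N : DMod 𝔸) : DMod 𝔸 where
  M i := M.M i × N.M i
  T v := (M.T v).prodMap (N.T v)
  T_smul v a m := by
    cases m with
    | mk x y => simp [AddMonoidHom.prodMap, Prod.smul_mk, M.T_smul, N.T_smul]
  T_id i := by ext m <;> simp [AddMonoidHom.prodMap, M.T_id, N.T_id]
  T_comp u v := by ext m <;> simp [AddMonoidHom.prodMap, M.T_comp, N.T_comp]

def prodFst {M N : DMod 𝔸} : prodDMod M N ⟶ M where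
  app i := AddMonoidHom.fst _ _
  app_smul i a m := rfl
  naturality v m := rfl

def prodSnd {M N : DMod 𝔸} : prodDMod M N ⟶ N where
  app i := AddMonoidHom.snd _ _
  app_smul i a m := rfl
  naturality v m := rfl

def prodPair {L M N : DMod 𝔸} (f : L ⟶ M) (g : L ⟶ N) : L ⟶ prodDMod M N where
  app i := (f.app i).prod (g.app i)
  app_smul i a m := by
    show (f.app i (a • m), g.app i (a • m)) = a • (f.app i m, g.app i m)
    rw [f.app_smul, g.app_smul]; rfl
  naturality v m := by
    show (f.app _ (L.T v m), g.app _ (L.T v m)) = (prodDMod M N).T v (f.app _ m, g.app _ m)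
    rw [f.naturality, g.naturality]; rfl

@[simp] lemma prodPair_fst {L M N : DMod 𝔸} (f : L ⟶ M) (g : L ⟶ N) :
    prodPair f g ≫ prodFst = f := by
  apply DModHom.hext; intro i m; rfl

@[simp] lemma prodPair_snd {L M N : DMod 𝔸} (f : L ⟶ M) (g : L ⟶ N) :
    prodPair f g ≫ prodSnd = g := by
  apply DModHom.hext; intro i m; rfl

@[simp] lemma prodFst_app {M N : DMod 𝔸} (i : C) (m : (prodDMod M N).M i) :
    (prodFst (M := M) (N := N)).app i m = m.1 := rfl

@[simp] lemma prodSnd_app {M N : DMod 𝔸} (i : C) (m : (prodDMod M N).M i) :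
    (prodSnd (M := M) (N := N)).app i m = m.2 := rfl

@[simp] lemma prodPair_app {L M N : DMod 𝔸} (f : L ⟶ M) (g : L ⟶ N) (i : C) (m : L.M i) :
    (prodPair f g).app i m = (f.app i m, g.app i m) := rfl

lemma prod_hom_ext {L M N : DMod 𝔸} {f g : L ⟶ prodDMod M N}
    (h1 : f ≫ prodFst = g ≫ prodFst) (h2 : f ≫ prodSnd = g ≫ prodSnd) : f = g := by
  apply DModHom.hext; intro i m
  have e1 := congrArg (fun t : L ⟶ M => t.app i m) h1
  have e2 := congrArg (fun t : L ⟶ N => t.app i m) h2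
  simp only [DModHom_comp_app] at e1 e2
  exact Prod.ext e1 e2

/-- The kernel of a morphism of `𝔸`-modules, as a submodule at each object. -/
def kerSub {M N : DMod 𝔸} (f : M ⟶ N) (i : C) : Submodule (𝔸.A i) (M.M i) where
  carrier := {m | f.app i m = 0}
  add_mem' := by intro a b ha hb; simp only [Set.mem_setOf_eq, map_add] at *; rw [ha, hb, add_zero]
  zero_mem' := by simp
  smul_mem' := by intro c a ha; simp only [Set.mem_setOf_eq, f.app_smul] at *; rw [ha, smul_zero]

/-- The kernel of a morphism of `𝔸`-modules. -/
def kerDMod {M N : DMod 𝔸} (f : M ⟶ N) : DMod 𝔸 where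
  M i := kerSub f i
  T v := {
    toFun := fun m => ⟨M.T v m.1, by
      have : f.app _ (M.T v m.1) = N.T v (f.app _ m.1) := f.naturality v m.1
      simp only [kerSub, Submodule.mem_mk, AddSubmonoid.mem_mk, AddSubsemigroup.mem_mk,
        Set.mem_setOf_eq] at *
      rw [this, m.2, map_zero]⟩
    map_zero' := Subtype.ext (by simp)
    map_add' := fun a b => Subtype.ext
      (show M.T v (↑a + ↑b) = M.T v ↑a + M.T v ↑b from map_add _ _ _) }
  T_smul v a m := Subtype.ext (M.T_smul v a m.1)
  T_id i := by
    ext m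
    exact congrArg (fun g : M.M i →+ M.M i => g m.1) (M.T_id i)
  T_comp u v := by
    ext m
    exact congrArg (fun g : _ →+ _ => g m.1) (M.T_comp u v)

def kerι {M N : DMod 𝔸} (f : M ⟶ N) : kerDMod f ⟶ M where
  app i := (kerSub f i).subtype.toAddMonoidHom
  app_smul i a m := rfl
  naturality v m := rfl

@[simp] lemma kerι_app {M N : DMod 𝔸} (f : M ⟶ N) (i : C) (m : (kerDMod f).M i) :
    (kerι f).app i m = m.1 := rfl

lemma kerDMod_mem {M N : DMod 𝔸} (f : M ⟶ N) (i : C) (m : (kerDMod f).M i) :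
    f.app i m.1 = 0 := m.2

def kerLift {L M N : DMod 𝔸} (f : M ⟶ N) (g : L ⟶ M) (hg : g ≫ f = 0) : L ⟶ kerDMod f where
  app i := {
    toFun := fun m => ⟨g.app i m, congrArg (fun t : L ⟶ N => t.app i m) hg⟩
    map_zero' := Subtype.ext (map_zero (g.app i))
    map_add' := fun a b => Subtype.ext
      (show g.app i (a + b) = g.app i a + g.app i b from map_add _ _ _) }
  app_smul i a m := Subtype.ext (g.app_smul i a m)
  naturality v m := Subtype.ext (g.naturality v m)

@[simp] lemma kerLift_ι {L M N : DMod 𝔸} (f : M ⟶ N) (g : L ⟶ M) (hg : g ≫ f = 0) :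
    kerLift f g hg ≫ kerι f = g := by
  apply DModHom.hext; intro i m; rfl

@[simp] lemma kerLift_app {L M N : DMod 𝔸} (f : M ⟶ N) (g : L ⟶ M) (hg : g ≫ f = 0)
    (i : C) (m : L.M i) : ((kerLift f g hg).app i m).1 = g.app i m := rfl

end Infrastructure
section Cycles

variable {𝔸 : Diagram k C}

lemma evalCx_d_apply (Ccx : ChainComplex (DMod 𝔸) ℕ) (i : C) (a b : ℕ) (x : (Ccx.X a).M i) :
    ((evalCx Ccx i).d a b) x = (Ccx.d a b).app i x := rfl

lemma d_comp_d_apply (Ccx : ChainComplex (DMod 𝔸) ℕ) (i : C) (a b c : ℕ) (x : (Ccx.X a).M i) :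
    (Ccx.d b c).app i ((Ccx.d a b).app i x) = 0 := by
  have h := congrArg (fun t : Ccx.X a ⟶ Ccx.X c => t.app i x) (Ccx.d_comp_d a b c)
  exact h

/-- The key consequence of objectwise contractibility: every cycle is a boundary,
via the contracting homotopy. -/
lemma conz (Ccx : ChainComplex (DMod 𝔸) ℕ) (i : C) (ho : Homotopy (𝟙 (evalCx Ccx i)) 0)
    (b : ℕ) (x : (Ccx.X b).M i) (hx : (Ccx.d b (b - 1)).app i x = 0) :
    (Ccx.d (b + 1) b).app i (ho.hom b (b + 1) x) = x := by
  have hcomm := ho.comm b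
  rw [prevD_eq (f := ho.hom) (show (ComplexShape.down ℕ).Rel (b+1) b from rfl)] at hcomm
  have key3 : (𝟙 ((evalCx Ccx i).X b) : (evalCx Ccx i).X b ⟶ _) x = (dNext b ho.hom) x +
      ((ho.hom b (b+1) ≫ (evalCx Ccx i).d (b+1) b) x) + ((0 : evalCx Ccx i ⟶ evalCx Ccx i).f b) x :=
    ConcreteCategory.congr_hom hcomm x
  have hone : (𝟙 ((evalCx Ccx i).X b) : (evalCx Ccx i).X b ⟶ _) x = x := rfl
  have hZ : ((0 : evalCx Ccx i ⟶ evalCx Ccx i).f b) x = 0 := rfl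
  rw [hone, hZ, add_zero] at key3
  have hd : (dNext b ho.hom) x = 0 := by
    cases b with
    | zero =>
      have hz : (evalCx Ccx i).d 0 ((ComplexShape.down ℕ).next 0) = 0 := by
        apply (evalCx Ccx i).shape
        intro h
        rw [ComplexShape.down_Rel] at h
        omega
      calc (dNext 0 ho.hom) x
          = ho.hom ((ComplexShape.down ℕ).next 0) 0 (((evalCx Ccx i).d 0 _) x) := rfl
        _ = ho.hom ((ComplexShape.down ℕ).next 0) 0 ((0 : (evalCx Ccx i).X 0 ⟶
              (evalCx Ccx i).X ((ComplexShape.down ℕ).next 0)) x) := by rw [hz]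
        _ = 0 := by rw [show ((0 : (evalCx Ccx i).X 0 ⟶ (evalCx Ccx i).X
              ((ComplexShape.down ℕ).next 0)) x) = 0 from rfl, map_zero]
    | succ m =>
      rw [dNext_eq ho.hom (show (ComplexShape.down ℕ).Rel (m+1) m from rfl)]
      have hx' : ((evalCx Ccx i).d (m+1) m) x = 0 := hx
      calc ((evalCx Ccx i).d (m+1) m ≫ ho.hom m (m+1)) x
          = ho.hom m (m+1) (((evalCx Ccx i).d (m+1) m) x) := rfl
        _ = ho.hom m (m+1) 0 := by rw [hx']
        _ = 0 := map_zero _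
  rw [hd, zero_add] at key3
  show ((evalCx Ccx i).d (b+1) b) (ho.hom b (b+1) x) = x
  have hcv : (ho.hom b (b+1) ≫ (evalCx Ccx i).d (b+1) b) x =
      ((evalCx Ccx i).d (b+1) b) (ho.hom b (b+1) x) := rfl
  rw [hcv] at key3
  exact key3.symm

/-- The subobject of cycles in degree `b`. -/
def cyclesDMod (Ccx : ChainComplex (DMod 𝔸) ℕ) (b : ℕ) : DMod 𝔸 :=
  kerDMod (Ccx.d b (b - 1))

/-- The canonical map from degree `a = b+1` onto the cycles in degree `b`. -/
def cyclesEpi (Ccx : ChainComplex (DMod 𝔸) ℕ) (a b : ℕ) : Ccx.X a ⟶ cyclesDMod Ccx b :=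
  kerLift (Ccx.d b (b - 1)) (Ccx.d a b) (Ccx.d_comp_d a b (b - 1))

lemma cyclesEpi_surj (Ccx : ChainComplex (DMod 𝔸) ℕ) (a b : ℕ) (hab : a = b + 1) (i : C)
    (ho : Homotopy (𝟙 (evalCx Ccx i)) 0) :
    Function.Surjective ((cyclesEpi Ccx a b).app i) := by
  subst hab
  intro z
  refine ⟨ho.hom b (b + 1) z.1, Subtype.ext ?_⟩
  exact conz Ccx i ho b z.1 z.2

lemma cyclesEpi_allow (Ccx : ChainComplex (DMod 𝔸) ℕ) (a b : ℕ) (hab : a = b + 1)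
    (hcon : ∀ i, Nonempty (Homotopy (𝟙 (evalCx Ccx i)) 0)) :
    Allowable (cyclesEpi Ccx a b) := by
  subst hab
  intro i
  obtain ⟨ho⟩ := hcon i
  refine ⟨{ toFun := fun z => ho.hom b (b + 1) z.1
            map_add' := fun y z => by
              show ho.hom b (b+1) (y + z).1 = _
              exact map_add (ho.hom b (b+1)).hom y.1 z.1
            map_smul' := fun c z => (ho.hom b (b+1)).hom.map_smul c z.1 }, ?_⟩
  intro m
  apply Subtype.ext
  show (Ccx.d (b+1) b).app i (ho.hom b (b+1) ((Ccx.d (b+1) b).app i m)) =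
    (Ccx.d (b+1) b).app i m
  exact conz Ccx i ho b _ (d_comp_d_apply Ccx i (b+1) b (b-1) m)

end Cycles
section NullHomotopy

variable {𝔸 : Diagram k C}

/-- Lifting lemma: a chain map (suitably reindexed by `q`) from a complex of relative
projectives to an objectwise contractible complex is null-homotopic; inductive form. -/
lemma nullhomotopy_of_contractible (Ccx : ChainComplex (DMod 𝔸) ℕ)
    (hcon : ∀ i, Nonempty (Homotopy (𝟙 (evalCx Ccx i)) 0))
    (P : ChainComplex (DMod 𝔸) ℕ) (hP : ∀ n, RelProjective (P.X n))
    (q : ℕ → ℕ) (hq : ∀ n, q (n + 1) = q n + 1)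
    (f : ∀ n, P.X n ⟶ Ccx.X (q n))
    (h1 : ∀ n, f (n + 1) ≫ Ccx.d (q (n + 1)) (q n) = P.d (n + 1) n ≫ f n)
    (h0 : f 0 ≫ Ccx.d (q 0) (q 0 - 1) = 0) :
    ∃ g : ∀ n, P.X n ⟶ Ccx.X (q (n + 1)),
      (f 0 = g 0 ≫ Ccx.d (q 1) (q 0)) ∧
      ∀ n, f (n + 1) = g (n + 1) ≫ Ccx.d (q (n + 2)) (q (n + 1)) + P.d (n + 1) n ≫ g n := by
  classical
  -- the basic lifting step through the allowable epi onto cycles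
  have lift : ∀ (n m : ℕ) (w : P.X n ⟶ Ccx.X (q m)) (hw : w ≫ Ccx.d (q m) (q m - 1) = 0),
      ∃ g : P.X n ⟶ Ccx.X (q (m + 1)), g ≫ Ccx.d (q (m + 1)) (q m) = w := by
    intro n m w hw
    obtain ⟨g, hg⟩ := hP n (Ccx.X (q (m + 1))) (cyclesDMod Ccx (q m))
      (cyclesEpi Ccx (q (m + 1)) (q m))
      (cyclesEpi_allow Ccx _ _ (hq m) hcon)
      (fun i => cyclesEpi_surj Ccx _ _ (hq m) i (hcon i).some)
      (kerLift _ w hw)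
    refine ⟨g, ?_⟩
    apply DModHom.hext; intro i x
    exact congrArg (fun t : P.X n ⟶ cyclesDMod Ccx (q m) => (t.app i x).1) hg
  -- base lift
  obtain ⟨a₀, ha₀⟩ := lift 0 0 (f 0) h0
  have ha₀' : a₀ ≫ Ccx.d (q 1) (q 0) = f 0 := ha₀
  -- step 0 → 1
  have hstep0 : ∃ b : P.X 1 ⟶ Ccx.X (q 2), f 1 = b ≫ Ccx.d (q 2) (q 1) + P.d 1 0 ≫ a₀ := by
    have e1 : f 1 ≫ Ccx.d (q 1) (q 0) = P.d 1 0 ≫ f 0 := h1 0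
    have hw : (f 1 - P.d 1 0 ≫ a₀) ≫ Ccx.d (q 1) (q 1 - 1) = 0 := by
      rw [show q 1 - 1 = q 0 by rw [hq 0]; omega]
      rw [Preadditive.sub_comp, e1, Category.assoc, ha₀', sub_self]
    obtain ⟨b, hb⟩ := lift 1 1 (f 1 - P.d 1 0 ≫ a₀) hw
    exact ⟨b, by rw [hb]; abel⟩
  obtain ⟨b₀, hb₀⟩ := hstep0
  -- the general step
  have step : ∀ (n : ℕ) (a : P.X n ⟶ Ccx.X (q (n + 1))) (b : P.X (n + 1) ⟶ Ccx.X (q (n + 2))),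
      f (n + 1) = b ≫ Ccx.d (q (n + 2)) (q (n + 1)) + P.d (n + 1) n ≫ a →
      ∃ c : P.X (n + 2) ⟶ Ccx.X (q (n + 3)),
        f (n + 2) = c ≫ Ccx.d (q (n + 3)) (q (n + 2)) + P.d (n + 2) (n + 1) ≫ b := by
    intro n a b hab
    have e1 : f (n + 2) ≫ Ccx.d (q (n + 2)) (q (n + 1)) = P.d (n + 2) (n + 1) ≫ f (n + 1) :=
      h1 (n + 1)
    have hw : (f (n + 2) - P.d (n + 2) (n + 1) ≫ b) ≫ Ccx.d (q (n + 2)) (q (n + 2) - 1) = 0 := by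
      rw [show q (n + 2) - 1 = q (n + 1) by rw [hq (n + 1)]; omega]
      rw [Preadditive.sub_comp, e1, hab, Preadditive.comp_add]
      simp only [Category.assoc, HomologicalComplex.d_comp_d_assoc, Limits.zero_comp,
        add_zero, sub_self]
    obtain ⟨c, hc⟩ := lift (n + 2) (n + 2) _ hw
    exact ⟨c, by rw [hc]; abel⟩
  -- assemble the sequence
  let T : ℕ → Type _ := fun n =>
    {ab : (P.X n ⟶ Ccx.X (q (n + 1))) × (P.X (n + 1) ⟶ Ccx.X (q (n + 2))) //
      f (n + 1) = ab.2 ≫ Ccx.d (q (n + 2)) (q (n + 1)) + P.d (n + 1) n ≫ ab.1}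
  let chain : ∀ n, T n := fun n => Nat.rec
    (⟨(a₀, b₀), hb₀⟩ : T 0)
    (fun m prev => ⟨(prev.1.2, (step m prev.1.1 prev.1.2 prev.2).choose),
      (step m prev.1.1 prev.1.2 prev.2).choose_spec⟩) n
  have hchain : ∀ n, (chain (n + 1)).1.1 = (chain n).1.2 := fun n => rfl
  refine ⟨fun n => (chain n).1.1, ha₀'.symm, fun n => ?_⟩
  have := (chain n).2
  rw [← hchain n] at this
  exact this

end NullHomotopy
section Cone

open HomologicalComplex

variable {𝔸 : Diagram k C}

variable {X Y : ChainComplex (DMod 𝔸) ℕ}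

/-- Components of the mapping cone of a chain map of complexes of `𝔸`-modules. -/
def coneX (s : X ⟶ Y) : ℕ → DMod 𝔸
  | 0 => Y.X 0
  | (n+1) => prodDMod (X.X n) (Y.X (n+1))

/-- Differentials of the mapping cone. -/
def coneD (s : X ⟶ Y) : ∀ n, coneX s (n+1) ⟶ coneX s n
  | 0 => prodFst ≫ s.f 0 + prodSnd ≫ Y.d 1 0
  | (n+1) => prodPair (prodFst ≫ (-(X.d (n+1) n)))
      (prodFst ≫ s.f (n+1) + prodSnd ≫ Y.d (n+2) (n+1))

lemma s_comm_apply (s : X ⟶ Y) (a b : ℕ) (i : C) (m : (X.X a).M i) :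
    (Y.d a b).app i ((s.f a).app i m) = (s.f b).app i ((X.d a b).app i m) := by
  have := congrArg (fun t : X.X a ⟶ Y.X b => t.app i m) (s.comm a b)
  exact this

lemma coneDsq (s : X ⟶ Y) : ∀ n, coneD s (n+1) ≫ coneD s n = 0 := by
  intro n
  apply DModHom.hext
  intro i m
  cases n with
  | zero =>
    show (s.f 0).app i ((-(X.d 1 0)).app i m.1) +
      (Y.d 1 0).app i ((s.f 1).app i m.1 + (Y.d 2 1).app i m.2) = 0
    rw [DModHom_neg_app, map_neg, map_add, s_comm_apply s 1 0 i m.1,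
      d_comp_d_apply Y i 2 1 0 m.2, add_zero, neg_add_cancel]
  | succ m' =>
    show ((-(X.d (m'+1) m')).app i ((-(X.d (m'+2) (m'+1))).app i m.1),
          (s.f (m'+1)).app i ((-(X.d (m'+2) (m'+1))).app i m.1) +
           (Y.d (m'+2) (m'+1)).app i ((s.f (m'+2)).app i m.1 +
             (Y.d (m'+3) (m'+2)).app i m.2))
        = ((0 : (X.X m').M i), (0 : (Y.X (m'+1)).M i))
    have h1 : (-(X.d (m'+1) m')).app i ((-(X.d (m'+2) (m'+1))).app i m.1) = 0 := by
      rw [DModHom_neg_app, DModHom_neg_app, map_neg, neg_neg]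
      exact d_comp_d_apply X i (m'+2) (m'+1) m' m.1
    have h2 : (s.f (m'+1)).app i ((-(X.d (m'+2) (m'+1))).app i m.1) +
        (Y.d (m'+2) (m'+1)).app i ((s.f (m'+2)).app i m.1 +
          (Y.d (m'+3) (m'+2)).app i m.2) = 0 := by
      rw [DModHom_neg_app, map_neg, map_add, s_comm_apply s (m'+2) (m'+1) i m.1,
        d_comp_d_apply Y i (m'+3) (m'+2) (m'+1) m.2, add_zero, neg_add_cancel]
    exact Prod.ext h1 h2

/-- The mapping cone, as a chain complex of `𝔸`-modules. -/
def coneC (s : X ⟶ Y) : ChainComplex (DMod 𝔸) ℕ :=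
  ChainComplex.of (coneX s) (coneD s) (coneDsq s)

lemma coneC_d_apply (s : X ⟶ Y) (n : ℕ) (i : C) (m : ((coneC s).X (n+1)).M i) :
    ((coneC s).d (n+1) n).app i m = (coneD s n).app i m := by
  have := congrArg (fun t : (coneC s).X (n+1) ⟶ (coneC s).X n => t.app i m)
    (ChainComplex.of_d (coneX s) (coneD s) n)
  exact this

end Cone
section ConeContract

open HomologicalComplex HomologicalComplex.homotopyCofiber

variable {𝔸 : Diagram k C} {X Y : ChainComplex (DMod 𝔸) ℕ}

lemma notRel0 : ¬ (ComplexShape.down ℕ).Rel 0 ((ComplexShape.down ℕ).next 0) := by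
  intro h
  rw [ComplexShape.down_Rel] at h
  omega

/-- Components of the comparison map from the evaluated cone to the homotopy cofiber. -/
noncomputable def alphaF (s : X ⟶ Y) (i : C) :
    ∀ n, ((evalCx (coneC s) i).X n ⟶ (homotopyCofiber (evalMap s i)).X n)
  | 0 => inrX (evalMap s i) 0
  | (n+1) => ModuleCat.ofHom
    { toFun := fun m => inlX (evalMap s i) n (n+1) rfl m.1 + inrX (evalMap s i) (n+1) m.2
      map_add' := fun p q => by
        show inlX (evalMap s i) n (n+1) rfl (p.1 + q.1) +
          inrX (evalMap s i) (n+1) (p.2 + q.2) = _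
        erw [map_add, map_add]; abel
      map_smul' := fun c p => by
        show inlX (evalMap s i) n (n+1) rfl (c • p.1) +
          inrX (evalMap s i) (n+1) (c • p.2) = _
        erw [map_smul, map_smul, ← smul_add]; rfl }

/-- Components of the comparison map from the homotopy cofiber to the evaluated cone. -/
noncomputable def betaF (s : X ⟶ Y) (i : C) :
    ∀ n, ((homotopyCofiber (evalMap s i)).X n ⟶ (evalCx (coneC s) i).X n)
  | 0 => sndX (evalMap s i) 0
  | (n+1) => ModuleCat.ofHom (LinearMap.prod (fstX (evalMap s i) (n+1) n rfl).hom (sndX (evalMap s i) (n+1)).hom)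

noncomputable def alphaCh (s : X ⟶ Y) (i : C) :
    evalCx (coneC s) i ⟶ homotopyCofiber (evalMap s i) where
  f := alphaF s i
  comm' := by
    intro a b hab
    have hab' : b + 1 = a := hab
    subst hab'
    apply ModuleCat.hom_ext; apply LinearMap.ext
    intro m
    show (homotopyCofiber (evalMap s i)).d (b+1) b (alphaF s i (b+1) m) =
      alphaF s i b ((evalCx (coneC s) i).d (b+1) b m)
    have hdm : (evalCx (coneC s) i).d (b+1) b m = (coneD s b).app i m := coneC_d_apply s b i m
    rw [hdm]
    cases b with
    | zero =>
      have e_inl : (homotopyCofiber (evalMap s i)).d 1 0 (inlX (evalMap s i) 0 1 rfl m.1) =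
          inrX (evalMap s i) 0 ((evalMap s i).f 0 m.1) := by
        have e0 := LinearMap.congr_fun (congrArg ModuleCat.Hom.hom (inlX_d' (evalMap s i) 1 0 rfl notRel0)) m.1
        simp only [ModuleCat.hom_comp, ModuleCat.hom_add, ModuleCat.hom_neg, ModuleCat.hom_zero, ModuleCat.hom_id, LinearMap.comp_apply, LinearMap.id_apply, Function.comp_apply, LinearMap.add_apply,
          LinearMap.neg_apply, LinearMap.zero_apply, ModuleCat.id_apply, map_neg] at e0
        exact e0
      have e_inr : (homotopyCofiber (evalMap s i)).d 1 0 (inrX (evalMap s i) 1 m.2) =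
          inrX (evalMap s i) 0 ((evalCx Y i).d 1 0 m.2) := by
        have e0 := LinearMap.congr_fun (congrArg ModuleCat.Hom.hom (inrX_d (evalMap s i) 1 0)) m.2
        simp only [ModuleCat.hom_comp, ModuleCat.hom_add, ModuleCat.hom_neg, ModuleCat.hom_zero, ModuleCat.hom_id, LinearMap.comp_apply, LinearMap.id_apply, Function.comp_apply, LinearMap.add_apply,
          LinearMap.neg_apply, LinearMap.zero_apply, ModuleCat.id_apply, map_neg] at e0
        exact e0
      show (homotopyCofiber (evalMap s i)).d 1 0
          (inlX (evalMap s i) 0 1 rfl m.1 + inrX (evalMap s i) 1 m.2) = _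
      rw [map_add, e_inl, e_inr]
      exact (map_add (inrX (evalMap s i) 0).hom _ _).symm
    | succ n =>
      have e_inl : (homotopyCofiber (evalMap s i)).d (n+2) (n+1)
            (inlX (evalMap s i) (n+1) (n+2) rfl m.1) =
          -(inlX (evalMap s i) n (n+1) rfl ((evalCx X i).d (n+1) n m.1)) +
            inrX (evalMap s i) (n+1) ((evalMap s i).f (n+1) m.1) := by
        have e0 := LinearMap.congr_fun (congrArg ModuleCat.Hom.hom (inlX_d (evalMap s i) (n+2) (n+1) n rfl rfl)) m.1
        simp only [ModuleCat.hom_comp, ModuleCat.hom_add, ModuleCat.hom_neg, ModuleCat.hom_zero, ModuleCat.hom_id, LinearMap.comp_apply, LinearMap.id_apply, Function.comp_apply, LinearMap.add_apply,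
          LinearMap.neg_apply, LinearMap.zero_apply, ModuleCat.id_apply, map_neg] at e0
        exact e0
      have e_inr : (homotopyCofiber (evalMap s i)).d (n+2) (n+1)
            (inrX (evalMap s i) (n+2) m.2) =
          inrX (evalMap s i) (n+1) ((evalCx Y i).d (n+2) (n+1) m.2) := by
        have e0 := LinearMap.congr_fun (congrArg ModuleCat.Hom.hom (inrX_d (evalMap s i) (n+2) (n+1))) m.2
        simp only [ModuleCat.hom_comp, ModuleCat.hom_add, ModuleCat.hom_neg, ModuleCat.hom_zero, ModuleCat.hom_id, LinearMap.comp_apply, LinearMap.id_apply, Function.comp_apply, LinearMap.add_apply,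
          LinearMap.neg_apply, LinearMap.zero_apply, ModuleCat.id_apply, map_neg] at e0
        exact e0
      show (homotopyCofiber (evalMap s i)).d (n+2) (n+1)
          (inlX (evalMap s i) (n+1) (n+2) rfl m.1 + inrX (evalMap s i) (n+2) m.2) = _
      rw [map_add, e_inl, e_inr]
      show _ = inlX (evalMap s i) n (n+1) rfl ((-(X.d (n+1) n)).app i m.1) +
        inrX (evalMap s i) (n+1) ((s.f (n+1)).app i m.1 + (Y.d (n+2) (n+1)).app i m.2)
      erw [show ((-(X.d (n+1) n)).app i m.1) = -((X.d (n+1) n).app i m.1) from rfl, map_neg,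
        map_add]
      abel

noncomputable def betaCh (s : X ⟶ Y) (i : C) :
    homotopyCofiber (evalMap s i) ⟶ evalCx (coneC s) i where
  f := betaF s i
  comm' := by
    intro a b hab
    have hab' : b + 1 = a := hab
    subst hab'
    apply ModuleCat.hom_ext; apply LinearMap.ext
    intro z
    show (evalCx (coneC s) i).d (b+1) b (betaF s i (b+1) z) =
      betaF s i b ((homotopyCofiber (evalMap s i)).d (b+1) b z)
    have hdm : (evalCx (coneC s) i).d (b+1) b (betaF s i (b+1) z) =
        (coneD s b).app i (betaF s i (b+1) z) := coneC_d_apply s b i _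
    rw [hdm]
    cases b with
    | zero =>
      have e_snd : sndX (evalMap s i) 0 ((homotopyCofiber (evalMap s i)).d 1 0 z) =
          (evalMap s i).f 0 (fstX (evalMap s i) 1 0 rfl z) +
            (evalCx Y i).d 1 0 (sndX (evalMap s i) 1 z) := by
        have e0 := LinearMap.congr_fun (congrArg ModuleCat.Hom.hom (d_sndX (evalMap s i) 1 0 rfl)) z
        simp only [ModuleCat.hom_comp, ModuleCat.hom_add, ModuleCat.hom_neg, ModuleCat.hom_zero, ModuleCat.hom_id, LinearMap.comp_apply, LinearMap.id_apply, Function.comp_apply, LinearMap.add_apply,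
          LinearMap.neg_apply, LinearMap.zero_apply, ModuleCat.id_apply, map_neg] at e0
        exact e0
      exact e_snd.symm
    | succ n =>
      have e_fst : fstX (evalMap s i) (n+1) n rfl
            ((homotopyCofiber (evalMap s i)).d (n+2) (n+1) z) =
          -((evalCx X i).d (n+1) n (fstX (evalMap s i) (n+2) (n+1) rfl z)) := by
        have e0 := LinearMap.congr_fun (congrArg ModuleCat.Hom.hom (d_fstX (evalMap s i) (n+2) (n+1) n rfl rfl)) z
        simp only [ModuleCat.hom_comp, ModuleCat.hom_add, ModuleCat.hom_neg, ModuleCat.hom_zero, ModuleCat.hom_id, LinearMap.comp_apply, LinearMap.id_apply, Function.comp_apply, LinearMap.add_apply,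
          LinearMap.neg_apply, LinearMap.zero_apply, ModuleCat.id_apply, map_neg] at e0
        exact e0
      have e_snd : sndX (evalMap s i) (n+1)
            ((homotopyCofiber (evalMap s i)).d (n+2) (n+1) z) =
          (evalMap s i).f (n+1) (fstX (evalMap s i) (n+2) (n+1) rfl z) +
            (evalCx Y i).d (n+2) (n+1) (sndX (evalMap s i) (n+2) z) := by
        have e0 := LinearMap.congr_fun (congrArg ModuleCat.Hom.hom (d_sndX (evalMap s i) (n+2) (n+1) rfl)) z
        simp only [ModuleCat.hom_comp, ModuleCat.hom_add, ModuleCat.hom_neg, ModuleCat.hom_zero, ModuleCat.hom_id, LinearMap.comp_apply, LinearMap.id_apply, Function.comp_apply, LinearMap.add_apply,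
          LinearMap.neg_apply, LinearMap.zero_apply, ModuleCat.id_apply, map_neg] at e0
        exact e0
      show ((-(X.d (n+1) n)).app i (fstX (evalMap s i) (n+2) (n+1) rfl z),
          (s.f (n+1)).app i (fstX (evalMap s i) (n+2) (n+1) rfl z) +
            (Y.d (n+2) (n+1)).app i (sndX (evalMap s i) (n+2) z)) =
        (fstX (evalMap s i) (n+1) n rfl ((homotopyCofiber (evalMap s i)).d (n+2) (n+1) z),
          sndX (evalMap s i) (n+1) ((homotopyCofiber (evalMap s i)).d (n+2) (n+1) z))
      refine Prod.ext ?_ ?_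
      · rw [e_fst]; rfl
      · rw [e_snd]; rfl

lemma alpha_beta (s : X ⟶ Y) (i : C) : alphaCh s i ≫ betaCh s i = 𝟙 (evalCx (coneC s) i) := by
  apply HomologicalComplex.hom_ext
  intro n
  rw [HomologicalComplex.comp_f, HomologicalComplex.id_f]
  apply ModuleCat.hom_ext; apply LinearMap.ext
  intro m
  show betaF s i n (alphaF s i n m) = m
  cases n with
  | zero =>
    have e0 := LinearMap.congr_fun (congrArg ModuleCat.Hom.hom (inrX_sndX (evalMap s i) 0)) m
    simp only [ModuleCat.hom_comp, ModuleCat.hom_add, ModuleCat.hom_neg, ModuleCat.hom_zero, ModuleCat.hom_id, LinearMap.comp_apply, LinearMap.id_apply, Function.comp_apply, ModuleCat.id_apply] at e0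
    exact e0
  | succ n =>
    show (fstX (evalMap s i) (n+1) n rfl (inlX (evalMap s i) n (n+1) rfl m.1 +
            inrX (evalMap s i) (n+1) m.2),
          sndX (evalMap s i) (n+1) (inlX (evalMap s i) n (n+1) rfl m.1 +
            inrX (evalMap s i) (n+1) m.2)) = m
    have e1 : fstX (evalMap s i) (n+1) n rfl (inlX (evalMap s i) n (n+1) rfl m.1) = m.1 := by
      have e0 := LinearMap.congr_fun (congrArg ModuleCat.Hom.hom (inlX_fstX (evalMap s i) n (n+1) rfl)) m.1
      simp only [ModuleCat.hom_comp, ModuleCat.hom_add, ModuleCat.hom_neg, ModuleCat.hom_zero, ModuleCat.hom_id, LinearMap.comp_apply, LinearMap.id_apply, Function.comp_apply, ModuleCat.id_apply] at e0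
      exact e0
    have e2 : fstX (evalMap s i) (n+1) n rfl (inrX (evalMap s i) (n+1) m.2) = 0 := by
      have e0 := LinearMap.congr_fun (congrArg ModuleCat.Hom.hom (inrX_fstX (evalMap s i) (n+1) n rfl)) m.2
      simp only [ModuleCat.hom_comp, ModuleCat.hom_add, ModuleCat.hom_neg, ModuleCat.hom_zero, ModuleCat.hom_id, LinearMap.comp_apply, LinearMap.id_apply, Function.comp_apply, LinearMap.zero_apply] at e0
      exact e0
    have e3 : sndX (evalMap s i) (n+1) (inlX (evalMap s i) n (n+1) rfl m.1) = 0 := by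
      have e0 := LinearMap.congr_fun (congrArg ModuleCat.Hom.hom (inlX_sndX (evalMap s i) n (n+1) rfl)) m.1
      simp only [ModuleCat.hom_comp, ModuleCat.hom_add, ModuleCat.hom_neg, ModuleCat.hom_zero, ModuleCat.hom_id, LinearMap.comp_apply, LinearMap.id_apply, Function.comp_apply, LinearMap.zero_apply] at e0
      exact e0
    have e4 : sndX (evalMap s i) (n+1) (inrX (evalMap s i) (n+1) m.2) = m.2 := by
      have e0 := LinearMap.congr_fun (congrArg ModuleCat.Hom.hom (inrX_sndX (evalMap s i) (n+1))) m.2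
      simp only [ModuleCat.hom_comp, ModuleCat.hom_add, ModuleCat.hom_neg, ModuleCat.hom_zero, ModuleCat.hom_id, LinearMap.comp_apply, LinearMap.id_apply, Function.comp_apply, ModuleCat.id_apply] at e0
      exact e0
    have h1 : fstX (evalMap s i) (n+1) n rfl (inlX (evalMap s i) n (n+1) rfl m.1 +
        inrX (evalMap s i) (n+1) m.2) = m.1 := by
      rw [map_add, e1, e2]; exact add_zero _
    have h2 : sndX (evalMap s i) (n+1) (inlX (evalMap s i) n (n+1) rfl m.1 +
        inrX (evalMap s i) (n+1) m.2) = m.2 := by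
      rw [map_add, e3, e4]; exact zero_add _
    exact Prod.ext h1 h2

lemma coneC_contractible (s : X ⟶ Y) (hs : RelQIsoCx s) (i : C) :
    Nonempty (Homotopy (𝟙 (evalCx (coneC s) i)) 0) := by
  obtain ⟨ho⟩ := hs i
  refine ⟨(Homotopy.ofEq ?_).trans
    (((ho.compLeft (alphaCh s i)).compRight (betaCh s i)).trans (Homotopy.ofEq ?_))⟩
  · rw [Category.comp_id, alpha_beta]
  · simp

end ConeContract
section KeyLemmas

open HomologicalComplex

variable {𝔸 : Diagram k C} {X Y : ChainComplex (DMod 𝔸) ℕ}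

/-- Build a homotopy from degreewise data. -/
def homotopyOfDegreewise {P Q : ChainComplex (DMod 𝔸) ℕ} (f g : P ⟶ Q)
    (H : ∀ n, P.X n ⟶ Q.X (n+1))
    (c0 : f.f 0 = H 0 ≫ Q.d 1 0 + g.f 0)
    (cs : ∀ n, f.f (n+1) = P.d (n+1) n ≫ H n + H (n+1) ≫ Q.d (n+2) (n+1) + g.f (n+1)) :
    Homotopy f g where
  hom i j := if h : i + 1 = j then H i ≫ eqToHom (congrArg Q.X h) else 0
  zero i j hij := dif_neg hij
  comm i := by
    rw [prevD_eq (f := fun i j => if h : i + 1 = j then H i ≫ eqToHom (congrArg Q.X h) else 0)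
      (show (ComplexShape.down ℕ).Rel (i+1) i from rfl)]
    rw [dif_pos rfl, eqToHom_refl, Category.comp_id]
    cases i with
    | zero =>
      have hz : dNext 0 (fun i j => if h : i + 1 = j then H i ≫ eqToHom (congrArg Q.X h)
          else 0) = 0 := by
        show P.d 0 ((ComplexShape.down ℕ).next 0) ≫ _ = 0
        rw [P.shape 0 ((ComplexShape.down ℕ).next 0) (by
          rw [ComplexShape.down_Rel]; omega), Limits.zero_comp]
      rw [hz, zero_add]
      exact c0
    | succ n =>
      rw [dNext_eq (fun i j => if h : i + 1 = j then H i ≫ eqToHom (congrArg Q.X h) else 0)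
        (show (ComplexShape.down ℕ).Rel (n+1) n from rfl)]
      rw [dif_pos rfl, eqToHom_refl, Category.comp_id]
      exact cs n

/-- The inclusion of `Y` into the cone of `s : X ⟶ Y`. -/
def coneInr (s : X ⟶ Y) : ∀ n, Y.X n ⟶ (coneC s).X n
  | 0 => 𝟙 (Y.X 0)
  | (n+1) => prodPair 0 (𝟙 (Y.X (n+1)))

lemma coneD_zero (s : X ⟶ Y) : coneD s 0 = prodFst ≫ s.f 0 + prodSnd ≫ Y.d 1 0 := rfl

lemma coneD_succ (s : X ⟶ Y) (n : ℕ) : coneD s (n+1) = prodPair (prodFst ≫ (-(X.d (n+1) n)))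
    (prodFst ≫ s.f (n+1) + prodSnd ≫ Y.d (n+2) (n+1)) := rfl

lemma coneC_d (s : X ⟶ Y) (n : ℕ) : (coneC s).d (n+1) n = coneD s n :=
  ChainComplex.of_d _ _ n

lemma coneInr_comm (s : X ⟶ Y) (n : ℕ) :
    coneInr s (n+1) ≫ coneD s n = Y.d (n+1) n ≫ coneInr s n := by
  apply DModHom.hext
  intro i m
  cases n with
  | zero =>
    show (s.f 0).app i ((0 : Y.X 1 ⟶ X.X 0).app i m) + (Y.d 1 0).app i m
      = (Y.d 1 0).app i m
    rw [DModHom_zero_app, map_zero, zero_add]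
  | succ m' =>
    show ((-(X.d (m'+1) m')).app i ((0 : Y.X (m'+2) ⟶ X.X (m'+1)).app i m),
        (s.f (m'+1)).app i ((0 : Y.X (m'+2) ⟶ X.X (m'+1)).app i m) +
          (Y.d (m'+2) (m'+1)).app i m)
      = ((0 : Y.X (m'+1) ⟶ X.X m').app i ((Y.d (m'+2) (m'+1)).app i m),
          (Y.d (m'+2) (m'+1)).app i m)
    have h1 : (-(X.d (m'+1) m')).app i ((0 : Y.X (m'+2) ⟶ X.X (m'+1)).app i m) =
        (0 : Y.X (m'+1) ⟶ X.X m').app i ((Y.d (m'+2) (m'+1)).app i m) := by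
      rw [DModHom_zero_app, DModHom_zero_app, map_zero]
    have h2 : (s.f (m'+1)).app i ((0 : Y.X (m'+2) ⟶ X.X (m'+1)).app i m) +
        (Y.d (m'+2) (m'+1)).app i m = (Y.d (m'+2) (m'+1)).app i m := by
      rw [DModHom_zero_app, map_zero, zero_add]
    exact Prod.ext h1 h2

/-- Surjectivity: any chain map from a complex of relative projectives into `Y`
lifts along a relative quasi-isomorphism `s : X ⟶ Y`, up to homotopy. -/
lemma exists_lift_up_to_homotopy (s : X ⟶ Y) (hs : RelQIsoCx s)
    (P : ChainComplex (DMod 𝔸) ℕ) (hP : ∀ n, RelProjective (P.X n)) (u : P ⟶ Y) :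
    ∃ v : P ⟶ X, Nonempty (Homotopy (v ≫ s) u) := by
  obtain ⟨g, hg0, hgs⟩ := nullhomotopy_of_contractible (coneC s)
    (fun i => coneC_contractible s hs i) P hP (fun n => n) (fun n => rfl)
    (fun n => u.f n ≫ coneInr s n)
    (by
      intro n
      show (u.f (n+1) ≫ coneInr s (n+1)) ≫ (coneC s).d (n+1) n =
        P.d (n+1) n ≫ (u.f n ≫ coneInr s n)
      erw [coneC_d s n, Category.assoc, coneInr_comm s n, ← Category.assoc,
        u.comm (n+1) n, Category.assoc])
    (by
      show (u.f 0 ≫ coneInr s 0) ≫ (coneC s).d 0 (0 - 1) = 0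
      rw [(coneC s).shape 0 (0 - 1) (by rw [ComplexShape.down_Rel]; omega),
        Limits.comp_zero])
  -- restate the conclusions
  have hg0' : u.f 0 ≫ coneInr s 0 = g 0 ≫ (coneC s).d 1 0 := hg0
  rw [coneC_d s 0] at hg0'
  have hgs' : ∀ n, u.f (n+1) ≫ coneInr s (n+1) =
      g (n+1) ≫ (show (coneC s).X (n+2) ⟶ (coneC s).X (n+1) from coneD s (n+1)) +
        P.d (n+1) n ≫ g n := by
    intro n
    have h : u.f (n+1) ≫ coneInr s (n+1) =
        g (n+1) ≫ (coneC s).d (n+2) (n+1) + P.d (n+1) n ≫ g n := hgs n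
    rwa [show (coneC s).d (n+2) (n+1) = coneD s (n+1) from coneC_d s (n+1)] at h
  -- componentwise versions
  have comp0 : ∀ (i : C) (m : (P.X 0).M i), (u.f 0).app i m =
      (s.f 0).app i ((g 0).app i m).1 + (Y.d 1 0).app i ((g 0).app i m).2 := by
    intro i m
    exact congrArg (fun t : P.X 0 ⟶ (coneC s).X 0 => t.app i m) hg0'
  have comp1 : ∀ (n : ℕ) (i : C) (m : (P.X (n+1)).M i), (0 : (X.X n).M i) =
      -((X.d (n+1) n).app i ((g (n+1)).app i m).1) +
        ((g n).app i ((P.d (n+1) n).app i m)).1 := by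
    intro n i m
    exact congrArg (fun t : P.X (n+1) ⟶ (coneC s).X (n+1) => (t.app i m).1) (hgs' n)
  have comp2 : ∀ (n : ℕ) (i : C) (m : (P.X (n+1)).M i), (u.f (n+1)).app i m =
      ((s.f (n+1)).app i ((g (n+1)).app i m).1 +
        (Y.d (n+2) (n+1)).app i ((g (n+1)).app i m).2) +
        ((g n).app i ((P.d (n+1) n).app i m)).2 := by
    intro n i m
    exact congrArg (fun t : P.X (n+1) ⟶ (coneC s).X (n+1) => (t.app i m).2) (hgs' n)
  -- the lift
  refine ⟨{ f := fun n => g n ≫ prodFst, comm' := ?_ }, ⟨homotopyOfDegreewise _ u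
    (fun n => -(g n ≫ prodSnd)) ?_ ?_⟩⟩
  · intro a b hab
    have hba : b + 1 = a := hab
    subst hba
    apply DModHom.hext
    intro i m
    show (X.d (b+1) b).app i ((g (b+1)).app i m).1 = ((g b).app i ((P.d (b+1) b).app i m)).1
    exact neg_add_eq_zero.mp (comp1 b i m).symm
  · apply DModHom.hext
    intro i m
    show (s.f 0).app i ((g 0).app i m).1 =
      (Y.d 1 0).app i (-((g 0).app i m).2) + (u.f 0).app i m
    rw [map_neg, comp0 i m]
    abel
  · intro n
    apply DModHom.hext
    intro i m
    show (s.f (n+1)).app i ((g (n+1)).app i m).1 =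
      -(((g n).app i ((P.d (n+1) n).app i m)).2) +
        (Y.d (n+2) (n+1)).app i (-((g (n+1)).app i m).2) + (u.f (n+1)).app i m
    rw [map_neg, comp2 n i m]
    abel

/-- Alternating sign on morphisms. -/
def sgn (n : ℕ) {M N : DMod 𝔸} (φ : M ⟶ N) : M ⟶ N := if Even n then φ else -φ

lemma sgn_zero {M N : DMod 𝔸} (φ : M ⟶ N) : sgn 0 φ = φ := if_pos Even.zero

lemma sgn_succ (n : ℕ) {M N : DMod 𝔸} (φ : M ⟶ N) : sgn (n+1) φ = -(sgn n φ) := by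
  by_cases h : Even n <;> simp [sgn, h, Nat.even_add_one]

lemma sgn_two (n : ℕ) {M N : DMod 𝔸} (φ : M ⟶ N) : sgn (n+2) φ = sgn n φ := by
  rw [sgn_succ, sgn_succ, neg_neg]

lemma sgn_comp (n : ℕ) {M N L : DMod 𝔸} (φ : M ⟶ N) (ψ : N ⟶ L) :
    sgn n φ ≫ ψ = sgn n (φ ≫ ψ) := by
  by_cases h : Even n <;> simp [sgn, h, Preadditive.neg_comp]

lemma comp_sgn (n : ℕ) {M N L : DMod 𝔸} (φ : M ⟶ N) (ψ : N ⟶ L) :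
    φ ≫ sgn n ψ = sgn n (φ ≫ ψ) := by
  by_cases h : Even n <;> simp [sgn, h, Preadditive.comp_neg]

lemma sgn_sgn (n : ℕ) {M N : DMod 𝔸} (φ : M ⟶ N) : sgn n (sgn n φ) = φ := by
  by_cases h : Even n <;> simp [sgn, h]

lemma sgn_neg (n : ℕ) {M N : DMod 𝔸} (φ : M ⟶ N) : sgn n (-φ) = -(sgn n φ) := by
  by_cases h : Even n <;> simp [sgn, h]

lemma sgn_add (n : ℕ) {M N : DMod 𝔸} (φ ψ : M ⟶ N) :
    sgn n (φ + ψ) = sgn n φ + sgn n ψ := by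
  by_cases h : Even n
  · simp [sgn, h]
  · simp only [sgn, if_neg h]
    rw [neg_add]

/-- Injectivity: a chain map from a complex of relative projectives which becomes
null-homotopic after composing with a relative quasi-isomorphism is null-homotopic. -/
lemma nullhomotopic_of_comp_nullhomotopic (s : X ⟶ Y) (hs : RelQIsoCx s)
    (P : ChainComplex (DMod 𝔸) ℕ) (hP : ∀ n, RelProjective (P.X n)) (v : P ⟶ X)
    (hv : Homotopy (v ≫ s) 0) : Nonempty (Homotopy v (0 : P ⟶ X)) := by
  set H : ∀ n, P.X n ⟶ Y.X (n+1) := fun n => hv.hom n (n+1) with hH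
  -- the homotopy identities
  have hc0 : v.f 0 ≫ s.f 0 = H 0 ≫ Y.d 1 0 := by
    have c := hv.comm 0
    rw [prevD_eq (f := hv.hom) (show (ComplexShape.down ℕ).Rel 1 0 from rfl)] at c
    have hz : dNext 0 hv.hom = 0 := by
      show P.d 0 ((ComplexShape.down ℕ).next 0) ≫ _ = 0
      rw [P.shape 0 ((ComplexShape.down ℕ).next 0) (by rw [ComplexShape.down_Rel]; omega),
        Limits.zero_comp]
    rw [hz, zero_add] at c
    have c' : v.f 0 ≫ s.f 0 = H 0 ≫ Y.d 1 0 + 0 := c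
    rwa [add_zero] at c'
  have hcs : ∀ n, v.f (n+1) ≫ s.f (n+1) =
      P.d (n+1) n ≫ H n + H (n+1) ≫ Y.d (n+2) (n+1) := by
    intro n
    have c := hv.comm (n+1)
    rw [prevD_eq (f := hv.hom) (show (ComplexShape.down ℕ).Rel (n+2) (n+1) from rfl),
      dNext_eq hv.hom (show (ComplexShape.down ℕ).Rel (n+1) n from rfl)] at c
    have c' : v.f (n+1) ≫ s.f (n+1) =
        P.d (n+1) n ≫ H n + H (n+1) ≫ Y.d (n+2) (n+1) + 0 := c
    rwa [add_zero] at c'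
  obtain ⟨g, hg0, hgs⟩ := nullhomotopy_of_contractible (coneC s)
    (fun i => coneC_contractible s hs i) P hP (fun n => n + 1) (fun n => rfl)
    (fun n => prodPair (sgn n (v.f n)) (sgn (n+1) (H n)))
    (by
      intro n
      show prodPair (sgn (n+1) (v.f (n+1))) (sgn (n+2) (H (n+1))) ≫ (coneC s).d (n+2) (n+1) =
        P.d (n+1) n ≫ prodPair (sgn n (v.f n)) (sgn (n+1) (H n))
      rw [show (coneC s).d (n+2) (n+1) = coneD s (n+1) from coneC_d s (n+1), coneD_succ]
      apply prod_hom_ext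
      · erw [Category.assoc, prodPair_fst, ← Category.assoc, prodPair_fst,
          Category.assoc, prodPair_fst]
        rw [Preadditive.comp_neg, sgn_comp, v.comm (n+1) n, ← sgn_succ, sgn_two,
          ← comp_sgn]
      · erw [Category.assoc, prodPair_snd, Preadditive.comp_add, ← Category.assoc,
          ← Category.assoc, prodPair_fst, prodPair_snd, Category.assoc, prodPair_snd]
        rw [sgn_comp, sgn_comp, hcs n, sgn_add,
          sgn_succ (n+1) (H (n+1) ≫ Y.d (n+2) (n+1)), ← comp_sgn]
        abel)
    (by
      show prodPair (sgn 0 (v.f 0)) (sgn 1 (H 0)) ≫ (coneC s).d 1 0 = 0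
      rw [show (coneC s).d 1 0 = coneD s 0 from coneC_d s 0, coneD_zero]
      erw [Preadditive.comp_add, ← Category.assoc, ← Category.assoc, prodPair_fst,
        prodPair_snd, sgn_zero, sgn_comp, sgn_succ, sgn_zero, hc0, add_neg_cancel])
  -- restate the conclusions
  have hg0' : prodPair (sgn 0 (v.f 0)) (sgn 1 (H 0)) = g 0 ≫ coneD s 1 := by
    have h : prodPair (sgn 0 (v.f 0)) (sgn 1 (H 0)) = g 0 ≫ (coneC s).d 2 1 := hg0
    rwa [show (coneC s).d 2 1 = coneD s 1 from coneC_d s 1] at h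
  have hgs' : ∀ n, prodPair (sgn (n+1) (v.f (n+1))) (sgn (n+2) (H (n+1))) =
      g (n+1) ≫ (show (coneC s).X (n+3) ⟶ (coneC s).X (n+2) from coneD s (n+2)) +
        P.d (n+1) n ≫ g n := by
    intro n
    have h : prodPair (sgn (n+1) (v.f (n+1))) (sgn (n+2) (H (n+1))) =
        g (n+1) ≫ (coneC s).d (n+3) (n+2) + P.d (n+1) n ≫ g n := hgs n
    rwa [show (coneC s).d (n+3) (n+2) = coneD s (n+2) from coneC_d s (n+2)] at h
  -- extract the first components
  have E0 : sgn 0 (v.f 0) = (g 0 ≫ prodFst) ≫ (-(X.d 1 0)) := by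
    apply DModHom.hext
    intro i m
    exact congrArg (fun t : P.X 0 ⟶ (coneC s).X 1 => (t.app i m).1) hg0'
  rw [sgn_zero] at E0
  have es : ∀ n, sgn (n+1) (v.f (n+1)) =
      (g (n+1) ≫ prodFst) ≫ (-(X.d (n+2) (n+1))) + P.d (n+1) n ≫ (g n ≫ prodFst) := by
    intro n
    apply DModHom.hext
    intro i m
    exact congrArg (fun t : P.X (n+1) ⟶ (coneC s).X (n+2) => (t.app i m).1) (hgs' n)
  -- build the null-homotopy of `v`
  refine ⟨homotopyOfDegreewise v 0 (fun n => sgn (n+1) (g n ≫ prodFst)) ?_ ?_⟩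
  · show v.f 0 = sgn 1 (g 0 ≫ prodFst) ≫ X.d 1 0 + (0 : P ⟶ X).f 0
    rw [show (0 : P ⟶ X).f 0 = 0 from rfl, add_zero, sgn_succ, sgn_zero,
      Preadditive.neg_comp, E0, Preadditive.comp_neg]
  · intro n
    show v.f (n+1) = P.d (n+1) n ≫ sgn (n+1) (g n ≫ prodFst) +
      sgn (n+2) (g (n+1) ≫ prodFst) ≫ X.d (n+2) (n+1) + (0 : P ⟶ X).f (n+1)
    rw [show (0 : P ⟶ X).f (n+1) = 0 from rfl, add_zero]
    have key2 : sgn (n+1) (sgn (n+1) (v.f (n+1))) =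
        sgn (n+1) ((g (n+1) ≫ prodFst) ≫ (-(X.d (n+2) (n+1))) +
          P.d (n+1) n ≫ (g n ≫ prodFst)) := congrArg (sgn (n+1)) (es n)
    rw [sgn_sgn, sgn_add, Preadditive.comp_neg, sgn_neg, ← sgn_succ,
      ← sgn_comp (n+2) (g (n+1) ≫ prodFst) (X.d (n+2) (n+1)),
      ← comp_sgn (n+1) (P.d (n+1) n) (g n ≫ prodFst)] at key2
    rw [key2]
    abel

end KeyLemmas
section Main

variable {𝔸 : Diagram k C}

/-- Composition with a relative quasi-isomorphism is a bijection on homotopy classes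
of maps out of a complex of relative projectives. -/
lemma key_bijective (P : ChainComplex (DMod 𝔸) ℕ) (hP : ∀ n, RelProjective (P.X n))
    {Z Z' : HomotopyCategory (DMod 𝔸) (ComplexShape.down ℕ)} (w : Z ⟶ Z')
    (hw : RelQIsoW 𝔸 w) :
    Function.Bijective (fun t : (HomotopyCategory.quotient (DMod 𝔸)
      (ComplexShape.down ℕ)).obj P ⟶ Z => t ≫ w) := by
  obtain ⟨s, hseq, hs⟩ := hw
  constructor
  · intro t₁ t₂ h
    obtain ⟨u₁, hu₁⟩ := (HomotopyCategory.quotient (DMod 𝔸)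
      (ComplexShape.down ℕ)).map_surjective t₁
    obtain ⟨u₂, hu₂⟩ := (HomotopyCategory.quotient (DMod 𝔸)
      (ComplexShape.down ℕ)).map_surjective t₂
    dsimp only at h
    erw [← hu₁, ← hu₂, ← hseq, ← Functor.map_comp, ← Functor.map_comp] at h
    have ho : Homotopy (u₁ ≫ s) (u₂ ≫ s) := HomotopyCategory.homotopyOfEq _ _ h
    have ho2 : Homotopy ((u₁ - u₂) ≫ s) 0 :=
      (Homotopy.ofEq (by rw [Preadditive.sub_comp])).trans (Homotopy.equivSubZero ho)
    obtain ⟨ho3⟩ := nullhomotopic_of_comp_nullhomotopic s hs P hP (u₁ - u₂) ho2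
    have ho4 : Homotopy u₁ u₂ := Homotopy.equivSubZero.symm ho3
    rw [← hu₁, ← hu₂]
    exact HomotopyCategory.eq_of_homotopy _ _ ho4
  · intro t
    obtain ⟨u, hu⟩ := (HomotopyCategory.quotient (DMod 𝔸)
      (ComplexShape.down ℕ)).map_surjective t
    obtain ⟨v, ⟨hv⟩⟩ := exists_lift_up_to_homotopy s hs P hP u
    refine ⟨(HomotopyCategory.quotient (DMod 𝔸) (ComplexShape.down ℕ)).map v, ?_⟩
    show (HomotopyCategory.quotient (DMod 𝔸) (ComplexShape.down ℕ)).map v ≫ w = t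
    erw [← hseq, ← Functor.map_comp, ← hu]
    exact HomotopyCategory.eq_of_homotopy _ _ hv

end Main
/-- For a right-bounded complex `P•` of relative projective `𝔸`-modules and any
right-bounded complex `Q•`, the canonical map from homotopy classes of chain maps
`P• → Q•` to morphisms `P• → Q•` in the relative derived category is a bijection. -/
theorem morphisms_from_relProjective_complex (𝔸 : Diagram k C)
    (P Q : ChainComplex (DMod 𝔸) ℕ) (hP : ∀ n, RelProjective (P.X n)) :
    Function.Bijective
      (fun g : (HomotopyCategory.quotient (DMod 𝔸) (ComplexShape.down ℕ)).obj P ⟶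
               (HomotopyCategory.quotient (DMod 𝔸) (ComplexShape.down ℕ)).obj Q =>
        (RelQIsoW 𝔸).Q.map g) := by
  set K := HomotopyCategory (DMod 𝔸) (ComplexShape.down ℕ)
  set PK : K := (HomotopyCategory.quotient (DMod 𝔸) (ComplexShape.down ℕ)).obj P with hPK
  set QK : K := (HomotopyCategory.quotient (DMod 𝔸) (ComplexShape.down ℕ)).obj Q with hQK
  -- the coyoneda functor inverts relative quasi-isomorphisms
  let F := coyoneda.obj (Opposite.op PK)
  have hF : (RelQIsoW 𝔸).IsInvertedBy F := by
    intro Z Z' w hw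
    rw [CategoryTheory.isIso_iff_bijective]
    exact key_bijective P hP w hw
  let G := Localization.lift F hF (RelQIsoW 𝔸).Q
  let e : (RelQIsoW 𝔸).Q ⋙ G ≅ F := Localization.fac F hF (RelQIsoW 𝔸).Q
  constructor
  · -- injectivity via the lifted functor
    intro g₁ g₂ hgg
    dsimp only at hgg
    have beta : ∀ g : PK ⟶ QK,
        e.hom.app QK (G.map ((RelQIsoW 𝔸).Q.map g) (e.inv.app PK (𝟙 PK))) = g := by
      intro g
      have hnat := ConcreteCategory.congr_hom (e.hom.naturality g) (e.inv.app PK (𝟙 PK))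
      have hnat' : e.hom.app QK (G.map ((RelQIsoW 𝔸).Q.map g) (e.inv.app PK (𝟙 PK))) =
          F.map g (e.hom.app PK (e.inv.app PK (𝟙 PK))) := hnat
      rw [hnat']
      have hii : e.inv.app PK ≫ e.hom.app PK = 𝟙 (F.obj PK) := e.inv_hom_id_app PK
      have hii' : e.hom.app PK (e.inv.app PK (𝟙 PK)) = 𝟙 PK := ConcreteCategory.congr_hom hii (𝟙 PK)
      rw [hii']
      exact Category.id_comp g
    have := congrArg (fun φ : (RelQIsoW 𝔸).Q.obj PK ⟶ (RelQIsoW 𝔸).Q.obj QK =>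
      e.hom.app QK (G.map φ (e.inv.app PK (𝟙 PK)))) hgg
    dsimp only at this
    rw [beta g₁, beta g₂] at this
    exact this
  · -- surjectivity via the explicit construction of the localization
    intro φ
    let S : MorphismProperty ((RelQIsoW 𝔸).Localization) := fun A B ψ =>
      ∀ u : PK ⟶ A.as.obj, ∃ v : PK ⟶ B.as.obj,
        (RelQIsoW 𝔸).Q.map v = (RelQIsoW 𝔸).Q.map u ≫ ψ
    have hScomp : S.IsStableUnderComposition := by
      constructor
      intro A B Cc ψ ψ' hψ hψ' u
      obtain ⟨v, hv⟩ := hψ u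
      obtain ⟨v', hv'⟩ := hψ' v
      exact ⟨v', by erw [hv', hv, Category.assoc]; rfl⟩
    have htop : S = ⊤ := by
      have h1 : ∀ ⦃Z₁ Z₂ : K⦄ (f : Z₁ ⟶ Z₂), S ((RelQIsoW 𝔸).Q.map f) := by
        intro Z₁ Z₂ f u
        exact ⟨u ≫ f, by erw [Functor.map_comp]; rfl⟩
      have h2 : ∀ ⦃Z₁ Z₂ : K⦄ (w : Z₁ ⟶ Z₂) (hw : RelQIsoW 𝔸 w),
          S (Localization.Construction.wInv w hw) := by
        intro Z₁ Z₂ w hw u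
        obtain ⟨v, hv⟩ := (key_bijective P hP w hw).2 u
        refine ⟨v, ?_⟩
        have hwi : (RelQIsoW 𝔸).Q.map w ≫ Localization.Construction.wInv w hw =
            𝟙 ((RelQIsoW 𝔸).Q.obj Z₁) := (Localization.Construction.wIso w hw).hom_inv_id
        have hv' : v ≫ w = u := hv
        erw [← hv', Functor.map_comp, Category.assoc, hwi, Category.comp_id]; rfl
      exact Localization.Construction.morphismProperty_eq_top S (hP₁ := h1) (hP₂ := h2)
    have hSφ : S φ := by rw [htop]; trivial
    obtain ⟨v, hv⟩ := hSφ (𝟙 PK)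
    refine ⟨v, ?_⟩
    show (RelQIsoW 𝔸).Q.map v = φ
    erw [hv, CategoryTheory.Functor.map_id, Category.id_comp]
end
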